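/- A D-compact subset A of a PN space (V, ν, τ, τ*), in which ν(V) ⊆ D⁺ and D⁺ is invariant under τ, is D-bounded and closed (in the strong topology). -/

import Mathlib

open Filter Topology

noncomputable section

/-- A distance distribution function: nondecreasing, left-continuous,
vanishing on `(-∞,0]`, bounded by `1`. -/
def DDF (F : ℝ → ℝ) : Prop :=
  Monotone F ∧ (∀ x ≤ 0, F x = 0) ∧ (∀ x, F x ≤ 1) ∧
    ∀ x, Tendsto F (nhdsWithin x (Set.Iio x)) (nhds (F x))

/-- The unit step at `0`. -/
def eps0 : ℝ → ℝ := fun x => if x ≤ 0 then 0 else 1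

/-- The unit step at `c`. -/
def epsc (c : ℝ) : ℝ → ℝ := fun x => if x ≤ c then 0 else 1

/-- `ε∞`: identically 0 on `ℝ` (value 1 only at `+∞`). -/
def epsInf : ℝ → ℝ := fun _ => 0

/-- Membership in `D⁺`: the distribution function tends to `1` at `+∞`. -/
def InDPlus (F : ℝ → ℝ) : Prop := Tendsto F atTop (nhds 1)

/-- Weak convergence of distribution functions. -/
def WeakConv (Fn : ℕ → ℝ → ℝ) (F : ℝ → ℝ) : Prop :=
  ∀ x, ContinuousAt F x → Tendsto (fun n => Fn n x) atTop (nhds (F x))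

/-- A continuous triangle function on `Δ⁺`. -/
def IsTriangleFunction (τ : (ℝ → ℝ) → (ℝ → ℝ) → (ℝ → ℝ)) : Prop :=
  (∀ F G, DDF F → DDF G → DDF (τ F G)) ∧
  (∀ F G H, DDF F → DDF G → DDF H → τ (τ F G) H = τ F (τ G H)) ∧
  (∀ F G, DDF F → DDF G → τ F G = τ G F) ∧
  (∀ F G H, DDF F → DDF G → DDF H → F ≤ G → τ F H ≤ τ G H) ∧
  (∀ F, DDF F → τ F eps0 = F) ∧
  (∀ (Fn : ℕ → ℝ → ℝ) F G, (∀ n, DDF (Fn n)) → DDF F → DDF G →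
    WeakConv Fn F → WeakConv (fun n => τ (Fn n) G) (τ F G))

/-- A probabilistic normed space `(V, ν, τ, τ*)`. -/
structure IsPNSpace (V : Type) [AddCommGroup V] [Module ℝ V]
    (ν : V → ℝ → ℝ) (τ τs : (ℝ → ℝ) → (ℝ → ℝ) → (ℝ → ℝ)) : Prop where
  ddf : ∀ p, DDF (ν p)
  tri : IsTriangleFunction τ
  tris : IsTriangleFunction τs
  tle : ∀ F G, DDF F → DDF G → τ F G ≤ τs F G
  n1 : ∀ p, ν p = eps0 ↔ p = 0
  n2 : ∀ p, ν (-p) = ν p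
  n3 : ∀ p q, τ (ν p) (ν q) ≤ ν (p + q)
  n4 : ∀ (p : V) (l : ℝ), 0 ≤ l → l ≤ 1 →
    ν p ≤ τs (ν (l • p)) (ν ((1 - l) • p))

/-- Archimedean triangle function: no idempotents besides `ε₀` and `ε∞`. -/
def IsArchimedean (τ : (ℝ → ℝ) → (ℝ → ℝ) → (ℝ → ℝ)) : Prop :=
  ∀ F, DDF F → τ F F = F → F = eps0 ∨ F = epsInf

/-- Strong convergence of a sequence in a PN space. -/
def StrongConv {V : Type} [AddCommGroup V] (ν : V → ℝ → ℝ)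
    (q : ℕ → V) (p : V) : Prop :=
  ∀ l : ℝ, 0 < l → ∀ᶠ n in atTop, ν (q n - p) l > 1 - l

/-- Strongly Cauchy sequence in a PN space. -/
def StrongCauchy {V : Type} [AddCommGroup V] (ν : V → ℝ → ℝ) (q : ℕ → V) : Prop :=
  ∀ l : ℝ, 0 < l → ∃ N, ∀ m n, N ≤ m → N ≤ n → ν (q m - q n) l > 1 - l

/-- `A` is `D`-bounded: some `G ∈ D⁺` lies below all `ν p`, `p ∈ A`. -/
def DBounded {V : Type} (ν : V → ℝ → ℝ) (A : Set V) : Prop :=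
  ∃ G : ℝ → ℝ, DDF G ∧ InDPlus G ∧ ∀ p ∈ A, G ≤ ν p

/-- `A` is `D`-compact: every sequence in `A` has a subsequence strongly
convergent to a point of `A`. -/
def DCompact {V : Type} [AddCommGroup V] (ν : V → ℝ → ℝ) (A : Set V) : Prop :=
  ∀ q : ℕ → V, (∀ n, q n ∈ A) → ∃ φ : ℕ → ℕ, StrictMono φ ∧
    ∃ p ∈ A, StrongConv ν (q ∘ φ) p

/-- `A` is closed under strong convergence of sequences. -/
def SeqClosed {V : Type} [AddCommGroup V] (ν : V → ℝ → ℝ) (A : Set V) : Prop :=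
  ∀ (q : ℕ → V) (p : V), (∀ n, q n ∈ A) → StrongConv ν q p → p ∈ A

/-- The probabilistic radius `R_A(x) = l⁻ inf {ν p x : p ∈ A}`. -/
def probRadius {V : Type} (ν : V → ℝ → ℝ) (A : Set V) (x : ℝ) : ℝ :=
  ⨆ y : Set.Iio x, ⨅ p : A, ν (p : V) (y : ℝ)



def Kfun (l : ℝ) : ℝ → ℝ := fun x => if x ≤ l then 0 else 1 - l

lemma ddf_nonneg {F : ℝ → ℝ} (hF : DDF F) (x : ℝ) : 0 ≤ F x := by
  rcases le_or_gt x 0 with hx | hx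
  · rw [hF.2.1 x hx]
  · rw [← hF.2.1 0 le_rfl]; exact hF.1 hx.le

lemma tendsto_left_const {f : ℝ → ℝ} {x c : ℝ} (hc : f x = c)
    (hev : ∀ᶠ y in nhdsWithin x (Set.Iio x), f y = c) :
    Tendsto f (nhdsWithin x (Set.Iio x)) (nhds (f x)) := by
  rw [hc]
  exact Tendsto.congr' (hev.mono fun y hy => hy.symm) tendsto_const_nhds

lemma Kfun_ddf {l : ℝ} (h0 : 0 < l) (h1 : l ≤ 1) : DDF (Kfun l) := by
  refine ⟨?_, ?_, ?_, ?_⟩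
  · intro a b hab
    simp only [Kfun]
    split_ifs with ha hb hb
    · exact le_refl 0
    · linarith
    · exact absurd (hab.trans hb) ha
    · exact le_refl _
  · intro x hx
    simp only [Kfun, if_pos (hx.trans h0.le)]
  · intro x
    simp only [Kfun]; split_ifs <;> linarith
  · intro x
    rcases le_or_gt x l with hx | hx
    · refine tendsto_left_const (if_pos hx) ?_
      filter_upwards [self_mem_nhdsWithin] with y hy
      exact if_pos ((le_of_lt hy).trans hx)
    · refine tendsto_left_const (if_neg (not_le.2 hx)) ?_
      filter_upwards [Ioo_mem_nhdsLT_of_mem ⟨hx, le_rfl⟩] with y hy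
      exact if_neg (not_le.2 hy.1)

lemma eps0_ddf : DDF eps0 := by
  refine ⟨?_, ?_, ?_, ?_⟩
  · intro a b hab
    simp only [eps0]
    split_ifs with ha hb hb
    · exact le_refl 0
    · exact zero_le_one
    · exact absurd (hab.trans hb) ha
    · exact le_refl 1
  · intro x hx; exact if_pos hx
  · intro x; simp only [eps0]; split_ifs <;> norm_num
  · intro x
    rcases le_or_gt x 0 with hx | hx
    · refine tendsto_left_const (if_pos hx) ?_
      filter_upwards [self_mem_nhdsWithin] with y hy
      exact if_pos ((le_of_lt hy).trans hx)
    · refine tendsto_left_const (if_neg (not_le.2 hx)) ?_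
      filter_upwards [Ioo_mem_nhdsLT_of_mem ⟨hx, le_rfl⟩] with y hy
      exact if_neg (not_le.2 hy.1)

lemma Kfun_anti {l μ : ℝ} (hl1 : l ≤ 1) (hlμ : l ≤ μ) : Kfun μ ≤ Kfun l := by
  intro x
  simp only [Kfun]
  split_ifs with h1 h2 h2
  · exact le_refl 0
  · linarith
  · exact absurd (h2.trans hlμ) h1
  · linarith

lemma Kfun_le {F : ℝ → ℝ} (hF : DDF F) {l : ℝ} (hb : 1 - l < F l) : Kfun l ≤ F := by
  intro x
  simp only [Kfun]
  split_ifs with h1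
  · exact ddf_nonneg hF x
  · exact le_trans hb.le (hF.1 (le_of_lt (not_le.1 h1)))

lemma Kfun_continuousAt {μ x : ℝ} (hx : x ≠ μ) : ContinuousAt (Kfun μ) x := by
  rcases hx.lt_or_gt with h | h
  · refine Filter.EventuallyEq.continuousAt (y := 0) ?_
    filter_upwards [Iio_mem_nhds h] with y hy
    exact if_pos hy.le
  · refine Filter.EventuallyEq.continuousAt (y := 1 - μ) ?_
    filter_upwards [Ioi_mem_nhds h] with y hy
    exact if_neg (not_le.2 hy)

lemma weakConv_Kfun {l : ℕ → ℝ} (hpos : ∀ j, 0 < l j)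
    (h0 : Tendsto l atTop (nhds 0)) : WeakConv (fun j => Kfun (l j)) eps0 := by
  intro x _
  rcases le_or_gt x 0 with hx | hx
  · have hK : ∀ j, Kfun (l j) x = 0 := fun j => if_pos (hx.trans (hpos j).le)
    have hE : eps0 x = 0 := if_pos hx
    rw [hE]
    exact tendsto_const_nhds.congr fun j => (hK j).symm
  · have hev : ∀ᶠ j in atTop, Kfun (l j) x = 1 - l j := by
      filter_upwards [h0.eventually (eventually_mem_set.2 (Iio_mem_nhds hx))] with j hj
      exact if_neg (not_le.2 hj)
    have hE : eps0 x = 1 := if_neg (not_le.2 hx)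
    rw [hE]
    have h1 : Tendsto (fun j => 1 - l j) atTop (nhds 1) := by
      simpa using tendsto_const_nhds.sub h0
    exact h1.congr' (hev.mono fun j hj => hj.symm)

lemma tri_comm {τ : (ℝ → ℝ) → (ℝ → ℝ) → (ℝ → ℝ)} (ht : IsTriangleFunction τ)
    {F G : ℝ → ℝ} (hF : DDF F) (hG : DDF G) : τ F G = τ G F := ht.2.2.1 F G hF hG

lemma tri_mono1 {τ : (ℝ → ℝ) → (ℝ → ℝ) → (ℝ → ℝ)} (ht : IsTriangleFunction τ)
    {F G H : ℝ → ℝ} (hF : DDF F) (hG : DDF G) (hH : DDF H) (hle : F ≤ G) :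
    τ F H ≤ τ G H := ht.2.2.2.1 F G H hF hG hH hle

lemma tri_mono2 {τ : (ℝ → ℝ) → (ℝ → ℝ) → (ℝ → ℝ)} (ht : IsTriangleFunction τ)
    {F G G' : ℝ → ℝ} (hF : DDF F) (hG : DDF G) (hG' : DDF G') (hle : G ≤ G') :
    τ F G ≤ τ F G' := by
  rw [tri_comm ht hF hG, tri_comm ht hF hG']
  exact tri_mono1 ht hG hG' hF hle

lemma tri_eps0_left {τ : (ℝ → ℝ) → (ℝ → ℝ) → (ℝ → ℝ)} (ht : IsTriangleFunction τ)
    {G : ℝ → ℝ} (hG : DDF G) : τ eps0 G = G := by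
  rw [tri_comm ht eps0_ddf hG]
  exact ht.2.2.2.2.1 G hG

lemma strongConv_Kfun_le {V : Type} [AddCommGroup V] {ν : V → ℝ → ℝ}
    {q : ℕ → V} {p : V} (hq : StrongConv ν q p) (hν : ∀ v, DDF (ν v))
    {l : ℝ} (hl : 0 < l) : ∀ᶠ n in atTop, Kfun l ≤ ν (q n - p) :=
  (hq l hl).mono fun _ hn => Kfun_le (hν _) hn

lemma strongConv_subseq {V : Type} [AddCommGroup V] {ν : V → ℝ → ℝ}
    {q : ℕ → V} {p : V} {φ : ℕ → ℕ} (hq : StrongConv ν q p) (hφ : StrictMono φ) :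
    StrongConv ν (q ∘ φ) p := by
  intro l hl
  rcases eventually_atTop.1 (hq l hl) with ⟨N, hN⟩
  exact eventually_atTop.2 ⟨N, fun n hn => hN _ (hn.trans hφ.le_apply)⟩

lemma tendsto_div_succ (μ : ℝ) :
    Tendsto (fun j : ℕ => μ / ((j : ℝ) + 1)) atTop (nhds 0) := by
  have h1 : Tendsto (fun j : ℕ => ((j : ℝ) + 1)) atTop atTop :=
    tendsto_atTop_add_const_right _ 1 tendsto_natCast_atTop_atTop
  simpa using Tendsto.div_atTop (tendsto_const_nhds (x := μ)) h1

/-- Uniqueness of strong limits. -/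
lemma strong_limit_unique {V : Type} [AddCommGroup V] [Module ℝ V]
    {ν : V → ℝ → ℝ} {τ τs : (ℝ → ℝ) → (ℝ → ℝ) → (ℝ → ℝ)} (h : IsPNSpace V ν τ τs)
    {q : ℕ → V} {p p' : V} (h1 : StrongConv ν q p) (h2 : StrongConv ν q p') : p = p' := by
  have key : ∀ x : ℝ, 0 < x → ∀ ε : ℝ, 0 < ε → 1 - ε < ν (p - p') x := by
    intro x hx ε hε
    set μ : ℝ := min (min x ε) 1 / 2 with hμdef
    have hμpos : 0 < μ := by
      have : 0 < min (min x ε) 1 := lt_min (lt_min hx hε) one_pos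
      simpa [hμdef] using half_pos this
    have hμ1 : μ ≤ 1 := by
      have h1' : min (min x ε) 1 ≤ 1 := min_le_right _ _
      rw [hμdef]; linarith
    have hμx : μ < x := by
      have h1' : min (min x ε) 1 ≤ x := le_trans (min_le_left _ _) (min_le_left _ _)
      rw [hμdef]; linarith
    have hμε : μ < ε := by
      have h1' : min (min x ε) 1 ≤ ε := le_trans (min_le_left _ _) (min_le_right _ _)
      rw [hμdef]; linarith
    set L : ℕ → ℝ := fun j => μ / ((j : ℝ) + 1) with hLdef
    have hLpos : ∀ j, 0 < L j := fun j => by positivity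
    have hLle : ∀ j, L j ≤ μ := by
      intro j
      rw [hLdef]
      rw [div_le_iff₀ (by positivity : (0:ℝ) < (j : ℝ) + 1)]
      nlinarith [Nat.cast_nonneg (α := ℝ) j]
    have hLddf : ∀ j, DDF (Kfun (L j)) := fun j => Kfun_ddf (hLpos j) ((hLle j).trans hμ1)
    have hμddf : DDF (Kfun μ) := Kfun_ddf hμpos hμ1
    have hwc := h.tri.2.2.2.2.2 (fun j => Kfun (L j)) eps0 (Kfun μ) hLddf eps0_ddf hμddf
      (weakConv_Kfun hLpos (by rw [hLdef]; exact tendsto_div_succ μ))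
    rw [tri_eps0_left h.tri hμddf] at hwc
    have htend := hwc x (Kfun_continuousAt (ne_of_gt hμx))
    have hKx : Kfun μ x = 1 - μ := if_neg (not_le.2 hμx)
    have hgt : 1 - ε < Kfun μ x := by rw [hKx]; linarith
    obtain ⟨j, hj⟩ := (htend.eventually (eventually_gt_nhds hgt)).exists
    have e1 := strongConv_Kfun_le h1 h.ddf (hLpos j)
    have e2 := strongConv_Kfun_le h2 h.ddf (hLpos j)
    obtain ⟨n, hn1, hn2⟩ := (e1.and e2).exists
    have c0 : τ (ν (p - q n)) (ν (q n - p')) ≤ ν (p - p') := by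
      have := h.n3 (p - q n) (q n - p')
      rwa [sub_add_sub_cancel] at this
    have hν1 : Kfun (L j) ≤ ν (p - q n) := by
      have heq : p - q n = -(q n - p) := by abel
      rw [heq, h.n2]
      exact hn1
    have c1 : τ (Kfun (L j)) (ν (q n - p')) ≤ τ (ν (p - q n)) (ν (q n - p')) :=
      tri_mono1 h.tri (hLddf j) (h.ddf _) (h.ddf _) hν1
    have hν2 : Kfun μ ≤ ν (q n - p') :=
      le_trans (Kfun_anti ((hLle j).trans hμ1) (hLle j)) hn2
    have c2 : τ (Kfun (L j)) (Kfun μ) ≤ τ (Kfun (L j)) (ν (q n - p')) :=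
      tri_mono2 h.tri (hLddf j) hμddf (h.ddf _) hν2
    calc 1 - ε < τ (Kfun (L j)) (Kfun μ) x := hj
      _ ≤ ν (p - p') x := le_trans (le_trans (c2 x) (c1 x)) (c0 x)
  have hone : ν (p - p') = eps0 := by
    funext x
    rcases le_or_gt x 0 with hx | hx
    · rw [(h.ddf _).2.1 x hx]
      exact (if_pos hx).symm
    · have ha : ν (p - p') x ≤ 1 := (h.ddf _).2.2.1 x
      have hb : 1 ≤ ν (p - p') x := by
        by_contra hc
        push_neg at hc
        have := key x hx (1 - ν (p - p') x) (by linarith)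
        linarith
      have hE : eps0 x = 1 := if_neg (not_le.2 hx)
      rw [hE]; linarith
  exact sub_eq_zero.1 ((h.n1 (p - p')).1 hone)

/-- Step function `k`-th layer used to build the lower bound `G`. -/
def gstep (z : ℕ → ℝ) (k : ℕ) (t : ℝ) : ℝ := if z k < t then 1 - 1 / ((k : ℝ) + 1) else 0

/-- Supremum of the layers. -/
def Gsup (z : ℕ → ℝ) (t : ℝ) : ℝ := ⨆ k, gstep z k t

lemma frac_pos_le (k : ℕ) : 0 < 1 / ((k : ℝ) + 1) ∧ 1 / ((k : ℝ) + 1) ≤ 1 := by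
  constructor
  · positivity
  · rw [div_le_one (by positivity)]
    nlinarith [Nat.cast_nonneg (α := ℝ) k]

lemma gstep_nonneg (z : ℕ → ℝ) (k : ℕ) (t : ℝ) : 0 ≤ gstep z k t := by
  rw [gstep]; split_ifs
  · linarith [(frac_pos_le k).2]
  · exact le_refl 0

lemma gstep_le_one (z : ℕ → ℝ) (k : ℕ) (t : ℝ) : gstep z k t ≤ 1 := by
  rw [gstep]; split_ifs
  · linarith [(frac_pos_le k).1]
  · exact zero_le_one

lemma gstep_mono (z : ℕ → ℝ) (k : ℕ) : Monotone (gstep z k) := by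
  intro a b hab
  rw [gstep, gstep]
  split_ifs with h1 h2 h2
  · exact le_refl _
  · exact absurd (lt_of_lt_of_le h1 hab) h2
  · linarith [(frac_pos_le k).2]
  · exact le_refl 0

lemma Gsup_bddAbove (z : ℕ → ℝ) (t : ℝ) : BddAbove (Set.range fun k => gstep z k t) := by
  refine ⟨1, ?_⟩
  rintro y ⟨k, rfl⟩
  exact gstep_le_one z k t

lemma Gsup_mono (z : ℕ → ℝ) : Monotone (Gsup z) := fun a b hab =>
  ciSup_mono (Gsup_bddAbove z b) fun k => gstep_mono z k hab

lemma Gsup_le_one (z : ℕ → ℝ) (t : ℝ) : Gsup z t ≤ 1 :=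
  ciSup_le fun k => gstep_le_one z k t

lemma Gsup_nonneg (z : ℕ → ℝ) (t : ℝ) : 0 ≤ Gsup z t :=
  le_trans (gstep_nonneg z 0 t) (le_ciSup (Gsup_bddAbove z t) 0)

lemma gstep_le_Gsup (z : ℕ → ℝ) (k : ℕ) (t : ℝ) : gstep z k t ≤ Gsup z t :=
  le_ciSup (Gsup_bddAbove z t) k

lemma Gsup_zero (z : ℕ → ℝ) (hz1 : ∀ k, (1 : ℝ) ≤ z k) {t : ℝ} (ht : t ≤ 0) :
    Gsup z t = 0 := by
  have hzero : ∀ k, gstep z k t = 0 := fun k => by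
    rw [gstep]
    exact if_neg (not_lt.2 (ht.trans (le_trans zero_le_one (hz1 k))))
  rw [Gsup]
  simp only [hzero]
  exact ciSup_const

lemma Gsup_left (z : ℕ → ℝ) (hz1 : ∀ k, (1 : ℝ) ≤ z k) (t : ℝ) :
    Tendsto (Gsup z) (nhdsWithin t (Set.Iio t)) (nhds (Gsup z t)) := by
  have hlim := (Gsup_mono z).tendsto_nhdsLT t
  have himb : BddAbove (Gsup z '' Set.Iio t) := by
    refine ⟨1, ?_⟩
    rintro y ⟨s, _, rfl⟩
    exact Gsup_le_one z s
  have hne : (Gsup z '' Set.Iio t).Nonempty :=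
    ⟨Gsup z (t - 1), ⟨t - 1, by simp, rfl⟩⟩
  have hsup : sSup (Gsup z '' Set.Iio t) = Gsup z t := by
    apply le_antisymm
    · refine csSup_le hne ?_
      rintro y ⟨s, hs, rfl⟩
      exact Gsup_mono z (le_of_lt hs)
    · rw [Gsup]
      refine ciSup_le fun k => ?_
      rcases lt_or_ge (z k) t with hk | hk
      · obtain ⟨s, hs1, hs2⟩ := exists_between hk
        have hgt : gstep z k t = gstep z k s := by
          rw [gstep, gstep, if_pos hk, if_pos hs1]
        rw [hgt]
        calc gstep z k s ≤ Gsup z s := gstep_le_Gsup z k s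
          _ ≤ sSup (Gsup z '' Set.Iio t) := le_csSup himb ⟨s, hs2, rfl⟩
      · have hzero : gstep z k t = 0 := by
          rw [gstep]; exact if_neg (not_lt.2 hk)
        rw [hzero]
        calc (0 : ℝ) ≤ Gsup z (t - 1) := Gsup_nonneg z _
          _ ≤ sSup (Gsup z '' Set.Iio t) :=
            le_csSup himb ⟨t - 1, by simp, rfl⟩
  rwa [hsup] at hlim

lemma Gsup_inDPlus (z : ℕ → ℝ) : InDPlus (Gsup z) := by
  rw [InDPlus]
  refine tendsto_order.2 ⟨?_, ?_⟩
  · intro a ha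
    obtain ⟨k, hk⟩ := exists_nat_one_div_lt (by linarith : (0 : ℝ) < 1 - a)
    filter_upwards [eventually_gt_atTop (z k)] with t ht
    have hgt : gstep z k t = 1 - 1 / ((k : ℝ) + 1) := by
      rw [gstep]; exact if_pos ht
    have : a < gstep z k t := by rw [hgt]; linarith
    exact lt_of_lt_of_le this (gstep_le_Gsup z k t)
  · intro a ha
    filter_upwards with t
    exact lt_of_le_of_lt (Gsup_le_one z t) ha

lemma dbounded_of_dcompact {V : Type} [AddCommGroup V] [Module ℝ V]
    {ν : V → ℝ → ℝ} {τ τs : (ℝ → ℝ) → (ℝ → ℝ) → (ℝ → ℝ)} (h : IsPNSpace V ν τ τs)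
    (hD : ∀ p : V, InDPlus (ν p)) (A : Set V) (hA : DCompact ν A) : DBounded ν A := by
  by_cases hU : ∀ k : ℕ, ∃ x : ℝ, ∀ p ∈ A, 1 - 1 / ((k : ℝ) + 1) < ν p x
  · choose x hx using hU
    set z : ℕ → ℝ := fun k => max (x k) 1 with hzdef
    have hz1 : ∀ k, (1 : ℝ) ≤ z k := fun k => le_max_right _ _
    have hzx : ∀ k : ℕ, ∀ p ∈ A, 1 - 1 / ((k : ℝ) + 1) < ν p (z k) := fun k p hp =>
      lt_of_lt_of_le (hx k p hp) ((h.ddf p).1 (le_max_left _ _))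
    refine ⟨Gsup z, ⟨Gsup_mono z, fun t ht => Gsup_zero z hz1 ht, Gsup_le_one z,
      Gsup_left z hz1⟩, Gsup_inDPlus z, ?_⟩
    intro p hp t
    rw [Gsup]
    refine ciSup_le fun k => ?_
    rw [gstep]
    split_ifs with hk
    · exact le_of_lt (lt_of_lt_of_le (hzx k p hp) ((h.ddf p).1 hk.le))
    · exact ddf_nonneg (h.ddf p) t
  · push_neg at hU
    obtain ⟨k0, hk0⟩ := hU
    exfalso
    set ε : ℝ := 1 / ((k0 : ℝ) + 1) with hεdef
    have hεpos : 0 < ε := (frac_pos_le k0).1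
    choose pn hpnA hpn using hk0
    set q : ℕ → V := fun n => pn (n : ℝ) with hqdef
    obtain ⟨φ, hφ, p, hpA, hconv⟩ := hA q fun n => hpnA _
    have hX : ∀ᶠ t in atTop, 1 - ε < ν p t :=
      (tendsto_order.1 (hD p)).1 (1 - ε) (by linarith)
    obtain ⟨X, hXa⟩ := eventually_atTop.1 hX
    have hcnt : Set.Countable {t : ℝ | ¬ ContinuousAt (ν p) t} :=
      (h.ddf p).1.countable_not_continuousAt
    obtain ⟨x₀, hx₀c, hx₀X⟩ := (Set.Countable.dense_compl ℝ hcnt).exists_mem_open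
      isOpen_Ioi (Set.nonempty_Ioi (a := X))
    have hcont : ContinuousAt (ν p) x₀ := not_not.1 hx₀c
    have hν₀ : 1 - ε < ν p x₀ := hXa x₀ (le_of_lt hx₀X)
    set L : ℕ → ℝ := fun j => 1 / ((j : ℝ) + 1) with hLdef
    have hLpos : ∀ j, 0 < L j := fun j => (frac_pos_le j).1
    have hLddf : ∀ j, DDF (Kfun (L j)) := fun j => Kfun_ddf (hLpos j) (frac_pos_le j).2
    have hL0 : Tendsto L atTop (nhds 0) := by
      rw [hLdef]
      simpa using tendsto_div_succ 1
    have hwc := h.tri.2.2.2.2.2 (fun j => Kfun (L j)) eps0 (ν p) hLddf eps0_ddf (h.ddf p)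
      (weakConv_Kfun hLpos hL0)
    rw [tri_eps0_left h.tri (h.ddf p)] at hwc
    obtain ⟨j, hj⟩ := ((hwc x₀ hcont).eventually (eventually_gt_nhds hν₀)).exists
    have hTddf : DDF (τ (Kfun (L j)) (ν p)) := h.tri.1 _ _ (hLddf j) (h.ddf p)
    obtain ⟨N, hN⟩ := eventually_atTop.1 (strongConv_Kfun_le hconv h.ddf (hLpos j))
    set k : ℕ := max N ⌈x₀⌉₊ with hkdef
    have hb : Kfun (L j) ≤ ν (q (φ k) - p) := hN k (le_max_left _ _)
    have hx₀k : x₀ ≤ ((φ k : ℕ) : ℝ) := by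
      calc x₀ ≤ (⌈x₀⌉₊ : ℝ) := Nat.le_ceil x₀
        _ ≤ (k : ℝ) := Nat.cast_le.2 (le_max_right _ _)
        _ ≤ ((φ k : ℕ) : ℝ) := Nat.cast_le.2 hφ.le_apply
    have hchain : τ (Kfun (L j)) (ν p) ≤ ν (q (φ k)) := by
      calc τ (Kfun (L j)) (ν p) ≤ τ (ν (q (φ k) - p)) (ν p) :=
            tri_mono1 h.tri (hLddf j) (h.ddf _) (h.ddf p) hb
        _ ≤ ν (q (φ k) - p + p) := h.n3 _ _
        _ = ν (q (φ k)) := by rw [sub_add_cancel]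
    have hlast : ν (q (φ k)) ((φ k : ℕ) : ℝ) ≤ 1 - ε := hpn _
    have hcontr : (1 : ℝ) - ε < 1 - ε :=
      calc 1 - ε < τ (Kfun (L j)) (ν p) x₀ := hj
        _ ≤ τ (Kfun (L j)) (ν p) ((φ k : ℕ) : ℝ) := hTddf.1 hx₀k
        _ ≤ ν (q (φ k)) ((φ k : ℕ) : ℝ) := hchain _
        _ ≤ 1 - ε := hlast
    exact lt_irrefl _ hcontr

/-- A `D`-compact subset of a PN space with `ν(V) ⊆ D⁺` and `τ`-invariant `D⁺`
is `D`-bounded and closed. -/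
theorem statement12 {V : Type} [AddCommGroup V] [Module ℝ V]
    (ν : V → ℝ → ℝ) (τ τs : (ℝ → ℝ) → (ℝ → ℝ) → (ℝ → ℝ))
    (h : IsPNSpace V ν τ τs)
    (hD : ∀ p : V, InDPlus (ν p))
    (hInv : ∀ F G, DDF F → DDF G → InDPlus F → InDPlus G → InDPlus (τ F G))
    (A : Set V) (hA : DCompact ν A) :
    DBounded ν A ∧ SeqClosed ν A := by
  constructor
  · exact dbounded_of_dcompact h hD A hA
  · intro q p hq hconv
    obtain ⟨φ, hφ, p', hp'A, hconv'⟩ := hA q hq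
    have h1 : StrongConv ν (q ∘ φ) p := strongConv_subseq hconv hφ
    rw [strong_limit_unique h h1 hconv']
    exact hp'A
end
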